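/- Let L ⊆ Σ* be a regular language and let Q be the set of Nerode equivalence classes of Σ* with respect to L (the states of the minimal deterministic automaton of L, with [u]·a := [ua]). Then L has finite variation if and only if there exists a total order ≤ on Q such that [ua] ≥ [u] for every u ∈ Σ* and every a ∈ Σ. -/

import Mathlib

/-- Two words are Nerode-equivalent w.r.t. `L` (they reach the same state of the
minimal automaton of `L`) if they have the same residuals:
`∀ z, u z ∈ L ↔ u' z ∈ L`. -/
def NerodeEquiv {σ : Type} (L : Set (List σ)) (u u' : List σ) : Prop :=
  ∀ z : List σ, u ++ z ∈ L ↔ u' ++ z ∈ L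

/-- The variation `var_L(w)` of a word `w = w₁⋯w_n`: the number of indices
`0 ≤ k < n` such that the prefixes `w₁⋯w_k` and `w₁⋯w_{k+1}` are not
Nerode-equivalent. -/
noncomputable def variation {σ : Type} (L : Set (List σ)) (w : List σ) : ℕ :=
  Nat.card {k : ℕ // k < w.length ∧ ¬ NerodeEquiv L (w.take k) (w.take (k + 1))}

/-- A language has finite variation if `sup_{w} var_L(w) < ∞`. -/
def FiniteVariation {σ : Type} (L : Set (List σ)) : Prop :=
  ∃ B : ℕ, ∀ w : List σ, variation L w ≤ B

/-- The Nerode setoid of `L`: words are identified when they are Nerode-equivalent. -/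
def nerodeSetoid {σ : Type} (L : Set (List σ)) : Setoid (List σ) where
  r := NerodeEquiv L
  iseqv :=
    ⟨fun _ _ => Iff.rfl, fun h z => (h z).symm, fun h₁ h₂ z => (h₁ z).trans (h₂ z)⟩

/-- The states of the minimal deterministic automaton of `L`: the Nerode
equivalence classes of words. -/
def NerodeClasses {σ : Type} (L : Set (List σ)) : Type :=
  Quotient (nerodeSetoid L)

namespace NerodeAux

variable {σ : Type}

theorem congr_right {L : Set (List σ)} {u v : List σ} (h : NerodeEquiv L u v) (z : List σ) :
    NerodeEquiv L (u ++ z) (v ++ z) := fun z' => by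
  simpa [List.append_assoc] using h (z ++ z')

theorem chain (L : Set (List σ)) (w : List σ) : ∀ (d a : ℕ),
    (∀ k, a ≤ k → k < a + d → NerodeEquiv L (w.take k) (w.take (k + 1))) →
    NerodeEquiv L (w.take a) (w.take (a + d)) := by
  intro d
  induction d with
  | zero => intro a _; exact fun z => Iff.rfl
  | succ d ih =>
      intro a h
      have h1 := ih a (fun k hk hk' => h k hk (by omega))
      have h2 := h (a + d) (by omega) (by omega)
      have e : a + (d + 1) = (a + d) + 1 := by omega
      rw [e]
      exact fun z => (h1 z).trans (h2 z)

instance fin_changes (L : Set (List σ)) (w : List σ) :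
    Finite {k : ℕ // k < w.length ∧ ¬ NerodeEquiv L (w.take k) (w.take (k + 1))} :=
  Finite.of_injective (fun x => (⟨x.1, x.2.1⟩ : Fin w.length))
    (fun a b h => Subtype.ext (by simpa using congrArg Fin.val h))

/-- `p` repeated `i` times. -/
def repw (p : List σ) : ℕ → List σ
  | 0 => []
  | i + 1 => repw p i ++ p

theorem repw_add (p : List σ) (i j : ℕ) : repw p (i + j) = repw p i ++ repw p j := by
  induction j with
  | zero => simp [repw]
  | succ j ih =>
      show repw p (i + j + 1) = _
      rw [repw, ih, repw, List.append_assoc]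

theorem repw_length (p : List σ) (i : ℕ) : (repw p i).length = i * p.length := by
  induction i with
  | zero => simp [repw]
  | succ i ih => simp [repw, ih]; ring

/-- The key pumping argument: if variation is bounded, then a cycle `u ++ z ++ z' ~ u`
forces `u ~ u ++ z`. -/
theorem cycle_equiv (L : Set (List σ)) (B : ℕ) (hB : ∀ w, variation L w ≤ B)
    (u z z' : List σ) (hcyc : NerodeEquiv L (u ++ (z ++ z')) u) :
    NerodeEquiv L u (u ++ z) := by
  by_contra hne
  set p := z ++ z' with hp
  set n := B + 1 with hn
  have hzlen : z.length ≤ p.length := by simp [hp]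
  have hrep : ∀ i, NerodeEquiv L (u ++ repw p i) u := by
    intro i
    induction i with
    | zero => intro zz; simp [repw]
    | succ i ih =>
        have h1 : NerodeEquiv L ((u ++ repw p i) ++ p) (u ++ p) := congr_right ih p
        have h2 : NerodeEquiv L (u ++ repw p (i + 1)) (u ++ p) := by
          simpa [repw, List.append_assoc] using h1
        exact fun zz => (h2 zz).trans (hcyc zz)
  set w := u ++ repw p n with hw
  have hwlen : w.length = u.length + n * p.length := by
    simp [hw, repw_length]
  have hexists : ∀ i : Fin n, ∃ k,
      (u.length + i.1 * p.length) ≤ k ∧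
      k < u.length + i.1 * p.length + z.length ∧
      k < w.length ∧ ¬ NerodeEquiv L (w.take k) (w.take (k + 1)) := by
    intro i
    set a := u.length + i.1 * p.length with ha
    have hile : i.1 + 1 ≤ n := i.2
    have hmul : (i.1 + 1) * p.length ≤ n * p.length := Nat.mul_le_mul_right _ hile
    have hbd : a + z.length ≤ w.length :=
      calc a + z.length = u.length + (i.1 * p.length + z.length) := by omega
        _ ≤ u.length + (i.1 + 1) * p.length := by rw [Nat.succ_mul]; omega
        _ ≤ u.length + n * p.length := by omega
        _ = w.length := hwlen.symm
    -- decompositions of w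
    have hsplit1 : w = (u ++ repw p i.1) ++ repw p (n - i.1) := by
      have e : i.1 + (n - i.1) = n := by omega
      rw [hw, List.append_assoc, ← repw_add, e]
    have hsplit2 : repw p (n - i.1) = p ++ repw p (n - i.1 - 1) := by
      have : n - i.1 = 1 + (n - i.1 - 1) := by omega
      rw [this, repw_add]
      simp [repw]
    have htakeA : w.take a = u ++ repw p i.1 := by
      have hl : (u ++ repw p i.1).length = a := by simp [ha, repw_length]
      rw [hsplit1, List.take_left' hl]
    have htakeB : w.take (a + z.length) = (u ++ repw p i.1) ++ z := by
      have hsp : w = ((u ++ repw p i.1) ++ z) ++ (z' ++ repw p (n - i.1 - 1)) := by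
        rw [hsplit1, hsplit2, hp]
        simp [List.append_assoc]
      have hl : ((u ++ repw p i.1) ++ z).length = a + z.length := by
        simp [ha, repw_length]; omega
      rw [hsp, List.take_left' hl]
    by_contra hcon
    push_neg at hcon
    have hall : ∀ k, a ≤ k → k < a + z.length → NerodeEquiv L (w.take k) (w.take (k + 1)) := by
      intro k hk hk'
      exact hcon k hk hk' (by omega)
    have hch := chain L w z.length a hall
    rw [htakeA, htakeB] at hch
    -- u ~ u ++ rep i ~ (u ++ rep i) ++ z ~ u ++ z
    have h1 : NerodeEquiv L u (u ++ repw p i.1) := fun zz => ((hrep i.1) zz).symm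
    have h2 : NerodeEquiv L ((u ++ repw p i.1) ++ z) (u ++ z) := congr_right (hrep i.1) z
    exact hne (fun zz => (((h1 zz).trans (hch zz)).trans (h2 zz)))
  choose k hk1 hk2 hk3 hk4 using hexists
  have hmono : ∀ i j : Fin n, i < j → k i < k j := by
    intro i j hij
    have h1 : k i < u.length + i.1 * p.length + z.length := hk2 i
    have h2 : u.length + j.1 * p.length ≤ k j := hk1 j
    have h3 : (i.1 + 1) * p.length ≤ j.1 * p.length :=
      Nat.mul_le_mul_right _ (by exact hij)
    have : i.1 * p.length + z.length ≤ j.1 * p.length := by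
      rw [Nat.succ_mul] at h3; omega
    omega
  have hinj : Function.Injective
      (fun i : Fin n =>
        (⟨k i, hk3 i, hk4 i⟩ :
          {k : ℕ // k < w.length ∧ ¬ NerodeEquiv L (w.take k) (w.take (k + 1))})) := by
    intro i j h
    have hkk : k i = k j := congrArg Subtype.val h
    rcases lt_trichotomy i j with h' | h' | h'
    · exact absurd hkk (Nat.ne_of_lt (hmono i j h'))
    · exact h'
    · exact absurd hkk.symm (Nat.ne_of_lt (hmono j i h'))
  have hcard : n ≤ variation L w := by
    have := Nat.card_le_card_of_injective _ hinj
    simpa [variation, Nat.card_eq_fintype_card] using this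
  have := hB w
  omega

end NerodeAux

open NerodeAux in
/-- A regular language `L ⊆ Σ*` has finite variation if and only if
there is a total order `≤` on the set `Q` of Nerode classes (the states of the
minimal automaton of `L`, with `[u]·a = [ua]`) such that `[ua] ≥ [u]` for every word
`u` and letter `a`. -/
theorem finiteVariation_iff_exists_compatible_linear_order
    (σ : Type) [Fintype σ] [Nonempty σ] (L : Set (List σ))
    (hreg : ∃ (Q : Type) (_ : Fintype Q) (M : DFA σ Q), ∀ w, w ∈ M.accepts ↔ w ∈ L) :
    FiniteVariation L ↔
      ∃ le : NerodeClasses L → NerodeClasses L → Prop,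
        IsLinearOrder (NerodeClasses L) le ∧
        ∀ (u : List σ) (a : σ),
          le (Quotient.mk (nerodeSetoid L) u) (Quotient.mk (nerodeSetoid L) (u ++ [a])) := by
  constructor
  · rintro ⟨B, hB⟩
    set r : NerodeClasses L → NerodeClasses L → Prop :=
      fun x y => ∃ u zz : List σ, x = Quotient.mk (nerodeSetoid L) u ∧
        y = Quotient.mk (nerodeSetoid L) (u ++ zz) with hr
    haveI : IsPartialOrder (NerodeClasses L) r :=
      { refl := by
          intro x
          obtain ⟨u, rfl⟩ := Quotient.exists_rep x
          exact ⟨u, [], rfl, congrArg (Quotient.mk (nerodeSetoid L)) (List.append_nil u).symm⟩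
        trans := by
          rintro x y zc ⟨u, z1, rfl, hy⟩ ⟨v, z2, hv, rfl⟩
          have hvu : NerodeEquiv L v (u ++ z1) := Quotient.exact (hv.symm.trans hy)
          refine ⟨u, z1 ++ z2, rfl, Quotient.sound ?_⟩
          have h4 := congr_right hvu z2
          exact fun zz => by simpa [List.append_assoc] using (h4 zz)
        antisymm := by
          rintro x y ⟨u, z1, rfl, hy⟩ ⟨v, z2, hv, hx⟩
          have e1 : NerodeEquiv L u (v ++ z2) := Quotient.exact hx
          have e2 : NerodeEquiv L v (u ++ z1) := Quotient.exact (hv.symm.trans hy)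
          have e3 : NerodeEquiv L (v ++ z2) ((u ++ z1) ++ z2) := congr_right e2 z2
          have hcyc : NerodeEquiv L (u ++ (z1 ++ z2)) u := by
            intro zz
            have := ((e1 zz).trans (e3 zz)).symm
            simpa [List.append_assoc] using this
          have h5 : NerodeEquiv L u (u ++ z1) := cycle_equiv L B hB u z1 z2 hcyc
          rw [hy]
          exact Quotient.sound h5 }
    obtain ⟨s, hs, hrs⟩ := extend_partialOrder r
    exact ⟨s, hs, fun u a => hrs _ _ ⟨u, [a], rfl, rfl⟩⟩
  · rintro ⟨le, hlin, hstep⟩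
    haveI := hlin
    obtain ⟨Q, fQ, M, hM⟩ := hreg
    haveI := fQ
    have hfac : ∀ u v : List σ, M.eval u = M.eval v → NerodeEquiv L u v := by
      intro u v h zz
      have : M.evalFrom (M.eval u) zz ∈ M.accept ↔ M.evalFrom (M.eval v) zz ∈ M.accept := by
        rw [h]
      simpa [← hM, DFA.mem_accepts, DFA.eval, DFA.evalFrom_of_append] using this
    haveI : Finite (NerodeClasses L) := by
      refine Finite.of_surjective
        (Function.extend M.eval (Quotient.mk (nerodeSetoid L))
          (fun _ => Quotient.mk (nerodeSetoid L) [])) ?_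
      intro x
      obtain ⟨u, rfl⟩ := Quotient.exists_rep x
      exact ⟨M.eval u,
        Function.FactorsThrough.extend_apply
          (fun a b h => Quotient.sound (hfac a b h)) _ u⟩
    have hle : ∀ (u zz : List σ),
        le (Quotient.mk (nerodeSetoid L) u) (Quotient.mk (nerodeSetoid L) (u ++ zz)) := by
      intro u zz
      induction zz generalizing u with
      | nil => simpa using refl_of le (Quotient.mk (nerodeSetoid L) u)
      | cons a t ih =>
          have h1 := hstep u a
          have h2 := ih (u ++ [a])
          have e : (u ++ [a]) ++ t = u ++ a :: t := by simp
          rw [e] at h2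
          exact trans_of le h1 h2
    refine ⟨Nat.card (NerodeClasses L), fun w => ?_⟩
    set g : {k : ℕ // k < w.length ∧ ¬ NerodeEquiv L (w.take k) (w.take (k + 1))} →
        NerodeClasses L :=
      fun x => Quotient.mk (nerodeSetoid L) (w.take (x.1 + 1)) with hg
    have key : ∀ x y, x.1 < y.1 → g x ≠ g y := by
      intro x y hxy heq
      have e1 : w.take y.1 = w.take (x.1 + 1) ++ ((w.drop (x.1 + 1)).take (y.1 - (x.1 + 1))) := by
        rw [← List.take_add]
        congr 1
        omega
      have h1 : le (g x) (Quotient.mk (nerodeSetoid L) (w.take y.1)) := by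
        rw [e1]; exact hle _ _
      have e2 : w.take (y.1 + 1) = w.take y.1 ++ (w.drop y.1).take 1 := by
        rw [← List.take_add]
      have h2 : le (Quotient.mk (nerodeSetoid L) (w.take y.1)) (g y) := by
        show le _ (Quotient.mk (nerodeSetoid L) (w.take (y.1 + 1)))
        rw [e2]; exact hle _ _
      have h1' : le (g y) (Quotient.mk (nerodeSetoid L) (w.take y.1)) := heq ▸ h1
      have : Quotient.mk (nerodeSetoid L) (w.take y.1) = g y := antisymm_of le h2 h1'
      exact y.2.2 (Quotient.exact this)
    have hinj : Function.Injective g := by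
      intro x y h
      rcases lt_trichotomy x.1 y.1 with h' | h' | h'
      · exact absurd h (key x y h')
      · exact Subtype.ext h'
      · exact absurd h.symm (key y x h')
    exact Nat.card_le_card_of_injective g hinj
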